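/- An ω-regular language L ⊆ Σ^ω is not DCW-recognizable if and only if there exist finite words x ∈ Σ* and x₁, x₂ ∈ Σ⁺ such that x·(x₁+x₂)*·x₁^ω ∩ L = ∅ and x·(x₁*·x₂)^ω ⊆ L. -/

import Mathlib

structure DetAuto (α : Type) where
  Q : Type
  [fin : Fintype Q]
  init : Q
  δ : Q → α → Q

attribute [instance] DetAuto.fin

/-- The run of a deterministic automaton on an infinite word. -/
def DetAuto.run {α : Type} (M : DetAuto α) (x : ℕ → α) : ℕ → M.Q
  | 0 => M.init
  | n + 1 => M.δ (M.run x n) (x n)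

/-- Parity acceptance: the maximal color occurring infinitely often in the run is odd. -/
def ParityAccept {α : Type} (M : DetAuto α) (c : M.Q → ℕ) (x : ℕ → α) : Prop :=
  ∃ m, Odd m ∧ (∃ᶠ n in Filter.atTop, c (M.run x n) = m) ∧
    ∀ m', (∃ᶠ n in Filter.atTop, c (M.run x n) = m') → m' ≤ m

/-- A language is ω-regular iff it is recognized by some deterministic parity automaton. -/
def OmegaRegular {α : Type} (L : Set (ℕ → α)) : Prop :=
  ∃ (M : DetAuto α) (c : M.Q → ℕ), ∀ x, x ∈ L ↔ ParityAccept M c x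

/-- `u` is a prefix of the infinite word `w`. -/
def HasPrefixWord {α : Type} (w : ℕ → α) (u : List α) : Prop :=
  ∀ i : Fin u.length, w i.1 = u.get i

/-- The ω-language `x·(x₁+x₂)*·x₁^ω`. -/
def LangA {α : Type} (x x₁ x₂ : List α) : Set (ℕ → α) :=
  { w | ∃ ws : List (List α), (∀ u ∈ ws, u = x₁ ∨ u = x₂) ∧
        ∀ n, HasPrefixWord w (x ++ ws.flatten ++ (List.replicate n x₁).flatten) }

/-- The ω-language `x·(x₁*·x₂)^ω`. -/
def LangB {α : Type} (x x₁ x₂ : List α) : Set (ℕ → α) :=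
  { w | ∃ j : ℕ → ℕ, ∀ n, HasPrefixWord w
        (x ++ ((List.range n).map (fun i => (List.replicate (j i) x₁).flatten ++ x₂)).flatten) }

/-- A language is DCW-recognizable iff some deterministic co-Büchi automaton recognizes it. -/
def DCWRecognizable {α : Type} (L : Set (ℕ → α)) : Prop :=
  ∃ (M : DetAuto α) (acc : Set M.Q),
    ∀ x, x ∈ L ↔ ¬ ∃ᶠ n in Filter.atTop, M.run x n ∈ acc

open Filter

namespace S14

variable {α : Type}

def runOn (M : DetAuto α) (q : M.Q) (u : List α) : M.Q := u.foldl M.δ q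

@[simp] lemma runOn_nil (M : DetAuto α) (q : M.Q) : runOn M q [] = q := rfl

@[simp] lemma runOn_append (M : DetAuto α) (q : M.Q) (u v : List α) :
    runOn M q (u ++ v) = runOn M (runOn M q u) v := List.foldl_append ..

@[simp] lemma runOn_cons (M : DetAuto α) (q : M.Q) (a : α) (u : List α) :
    runOn M q (a :: u) = runOn M (M.δ q a) u := rfl

/-- segment of an infinite word -/
def seg (x : ℕ → α) : ℕ → ℕ → List α
  | _, 0 => []
  | a, k+1 => x a :: seg x (a+1) k

@[simp] lemma seg_zero (x : ℕ → α) (a : ℕ) : seg x a 0 = [] := rfl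

@[simp] lemma seg_length (x : ℕ → α) : ∀ k a, (seg x a k).length = k
  | 0, _ => rfl
  | k+1, a => by simp [seg, seg_length x k]

lemma runOn_seg (M : DetAuto α) (x : ℕ → α) : ∀ k a,
    runOn M (M.run x a) (seg x a k) = M.run x (a + k)
  | 0, a => rfl
  | k+1, a => by
    have : M.δ (M.run x a) (x a) = M.run x (a+1) := rfl
    simp only [seg, runOn_cons, this, runOn_seg M x k (a+1)]
    ring_nf

lemma seg_take (x : ℕ → α) : ∀ k a i, i ≤ k → (seg x a k).take i = seg x a i
  | 0, a, i, h => by simp_all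
  | k+1, a, i, h => by
    cases i with
    | zero => simp
    | succ i => simp [seg, List.take_succ_cons, seg_take x k (a+1) i (by omega)]

def maxLoop (M : DetAuto α) (c : M.Q → ℕ) (q : M.Q) (u : List α) : ℕ :=
  (Finset.range u.length).sup (fun i => c (runOn M q (u.take i)))

lemma le_maxLoop (M : DetAuto α) (c : M.Q → ℕ) (q : M.Q) (u : List α) {i : ℕ}
    (hi : i < u.length) : c (runOn M q (u.take i)) ≤ maxLoop M c q u :=
  Finset.le_sup (f := fun i => c (runOn M q (u.take i))) (Finset.mem_range.2 hi)

lemma exists_maxLoop (M : DetAuto α) (c : M.Q → ℕ) (q : M.Q) (u : List α) (hu : u ≠ []) :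
    ∃ i < u.length, c (runOn M q (u.take i)) = maxLoop M c q u := by
  obtain ⟨i, hi, h⟩ := (Finset.range u.length).exists_mem_eq_sup
    (Finset.nonempty_range_iff.2 (Nat.pos_iff_ne_zero.1 (List.length_pos_iff.2 hu))) (fun i => c (runOn M q (u.take i)))
  exact ⟨i, Finset.mem_range.1 hi, h.symm⟩

lemma cq_le_maxLoop (M : DetAuto α) (c : M.Q → ℕ) (q : M.Q) (u : List α) (hu : u ≠ []) :
    c q ≤ maxLoop M c q u := by
  have := le_maxLoop M c q u (i := 0) (List.length_pos_iff.2 hu)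
  simpa using this

/-- building an infinite word from a chain of prefixes -/
def wordOf (P : ℕ → List α) (d : α) : ℕ → α := fun n => (P (n+1)).getD n d

lemma hasPrefixWord_wordOf (P : ℕ → List α) (d : α)
    (hmono : ∀ n, P n <+: P (n+1)) (hlen : ∀ n, n < (P (n+1)).length) (m : ℕ) :
    HasPrefixWord (wordOf P d) (P m) := by
  have hchain : ∀ a b, a ≤ b → P a <+: P b := by
    intro a b h
    induction b with
    | zero => simp [Nat.le_zero.1 h]
    | succ b ih =>
      rcases Nat.lt_or_ge a (b+1) with h' | h'
      · exact (ih (by omega)).trans (hmono b)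
      · have : a = b + 1 := by omega
        simp [this]
  intro i
  have hi : (i : ℕ) < (P (i+1)).length := hlen i
  have : wordOf P d i = (P (i+1))[(i:ℕ)]'hi := List.getD_eq_getElem _ _ hi
  rw [this, List.get_eq_getElem]
  rcases le_or_gt ((i:ℕ)+1) m with h | h
  · exact ((hchain _ _ h).getElem hi).symm ▸ rfl
  · exact ((hchain m ((i:ℕ)+1) h.le).getElem i.2).symm

open Filter

lemma run_eq_of_prefix (M : DetAuto α) (w : ℕ → α) (u : List α) (h : HasPrefixWord w u) :
    ∀ n, n ≤ u.length → M.run w n = runOn M M.init (u.take n) := by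
  intro n
  induction n with
  | zero => simp [DetAuto.run]
  | succ n ih =>
    intro hn
    have hn' : n < u.length := by omega
    have hw : w n = u[n] := h ⟨n, hn'⟩
    have : u.take (n+1) = u.take n ++ [u[n]] := by
      rw [← List.take_concat_get hn', List.concat_eq_append]
    rw [this, runOn_append]
    show M.δ (M.run w n) (w n) = _
    rw [ih (by omega), hw]
    rfl

lemma runOn_replicate_loop (M : DetAuto α) (q : M.Q) (v : List α) (hv : runOn M q v = q) :
    ∀ k, runOn M q (List.replicate k v).flatten = q
  | 0 => rfl
  | k+1 => by
    rw [List.replicate_succ, List.flatten_cons, runOn_append, hv,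
      runOn_replicate_loop M q v hv k]

lemma length_flatten_replicate (k : ℕ) (v : List α) :
    (List.replicate k v).flatten.length = k * v.length := by
  simp [List.length_flatten, Function.comp, mul_comm]

lemma runOn_take_replicate (M : DetAuto α) (q : M.Q) (v : List α) (hv : runOn M q v = q)
    (hv' : v ≠ []) :
    ∀ k t, t ≤ k * v.length →
      runOn M q ((List.replicate k v).flatten.take t) = runOn M q (v.take (t % v.length)) := by
  intro k
  induction k with
  | zero => intro t ht; simp_all
  | succ k ih =>
    intro t ht
    rw [List.replicate_succ, List.flatten_cons]
    rcases le_or_gt t v.length with h | h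
    · rw [List.take_append_of_le_length h]
      rcases eq_or_lt_of_le h with h' | h'
      · subst h'
        simp [List.take_length, hv, Nat.mod_self]
      · rw [Nat.mod_eq_of_lt h']
    · have hlen : v.length ≤ t := h.le
      rw [List.take_append]
      have h2 : v.take t = v := List.take_of_length_le hlen
      rw [h2, runOn_append, hv]
      have h3 : t - v.length ≤ k * v.length := by
        have : (k+1) * v.length = k * v.length + v.length := by ring
        omega
      rw [ih _ h3]
      congr 1
      conv_rhs => rw [show t = (t - v.length) + v.length by omega]
      rw [Nat.add_mod_right]

/-- pigeonhole for frequently -/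
lemma exists_frequently_and {Q : Type} [Fintype Q] (f : ℕ → Q) (p : ℕ → Prop)
    (hp : ∃ᶠ n in atTop, p n) : ∃ q, ∃ᶠ n in atTop, p n ∧ f n = q := by
  by_contra hc
  push_neg at hc
  have h1 : ∀ᶠ n in atTop, ∀ q ∈ (Finset.univ : Finset Q), ¬(p n ∧ f n = q) := by
    rw [Filter.eventually_all_finset]
    intro q _
    simpa using (hc q)
  obtain ⟨n, hn, h2⟩ := (hp.and_eventually h1).exists
  exact h2 (f n) (Finset.mem_univ _) ⟨hn, rfl⟩

lemma exists_frequently_state {Q : Type} [Fintype Q] (f : ℕ → Q) :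
    ∃ q, ∃ᶠ n in atTop, f n = q := by
  obtain ⟨q, h⟩ := exists_frequently_and f (fun _ => True) (frequently_atTop.2 fun N => ⟨N, le_rfl, trivial⟩)
  exact ⟨q, h.mono fun n hn => hn.2⟩

/-- eventually the run is in the set of frequently visited states -/
lemma eventually_mem_freq {Q : Type} [Fintype Q] (f : ℕ → Q) :
    ∀ᶠ n in atTop, ∃ᶠ m in atTop, f m = f n := by
  classical
  have h1 : ∀ᶠ n in atTop, ∀ q ∈ (Finset.univ : Finset Q),
      (¬ ∃ᶠ m in atTop, f m = q) → f n ≠ q := by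
    rw [Filter.eventually_all_finset]
    intro q _
    by_cases hq : ∃ᶠ m in atTop, f m = q
    · filter_upwards with n h; exact absurd hq h
    · filter_upwards [not_frequently.1 hq] with n h _; exact h
  filter_upwards [h1] with n hn
  by_contra hc
  exact hn (f n) (Finset.mem_univ _) hc rfl
lemma runOn_flatten_of_loops (M : DetAuto α) (q : M.Q) :
    ∀ ws : List (List α), (∀ u ∈ ws, runOn M q u = q) → runOn M q ws.flatten = q
  | [], _ => rfl
  | u :: ws, h => by
    rw [List.flatten_cons, runOn_append, h u (by simp)]
    exact runOn_flatten_of_loops M q ws (fun v hv => h v (by simp [hv]))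

/-- prefixes made of blocks -/
def blP (x : List α) (bl : ℕ → List α) (n : ℕ) : List α :=
  x ++ ((List.range n).map bl).flatten

lemma blP_zero (x : List α) (bl : ℕ → List α) : blP x bl 0 = x := by simp [blP]

lemma blP_succ (x : List α) (bl : ℕ → List α) (n : ℕ) :
    blP x bl (n+1) = blP x bl n ++ bl n := by
  simp [blP, List.range_succ]

lemma blP_length_succ (x : List α) (bl : ℕ → List α) (n : ℕ) :
    (blP x bl (n+1)).length = (blP x bl n).length + (bl n).length := by
  rw [blP_succ]; exact List.length_append

section Blocks

variable {M : DetAuto α} {q : M.Q} {w : ℕ → α} {x : List α} {bl : ℕ → List α}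

lemma blP_runOn (hq : runOn M M.init x = q) (hblq : ∀ n, runOn M q (bl n) = q) :
    ∀ n, runOn M M.init (blP x bl n) = q
  | 0 => by rw [blP_zero]; exact hq
  | n+1 => by rw [blP_succ, runOn_append, blP_runOn hq hblq n, hblq]

lemma blP_le_length (hbl1 : ∀ i, 0 < (bl i).length) : ∀ n, n ≤ (blP x bl n).length
  | 0 => Nat.zero_le _
  | n+1 => by
    rw [blP_length_succ]
    have := blP_le_length hbl1 n
    have := hbl1 n
    omega

lemma blP_run (hq : runOn M M.init x = q) (hblq : ∀ n, runOn M q (bl n) = q)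
    (hpre : ∀ n, HasPrefixWord w (blP x bl n)) (n t : ℕ) (ht : t ≤ (bl n).length) :
    M.run w ((blP x bl n).length + t) = runOn M q ((bl n).take t) := by
  have hlen : (blP x bl n).length + t ≤ (blP x bl (n+1)).length := by
    rw [blP_length_succ]; omega
  rw [run_eq_of_prefix M w _ (hpre (n+1)) _ hlen, blP_succ,
    List.take_append, List.take_of_length_le (by omega),
    Nat.add_sub_cancel_left, runOn_append, blP_runOn hq hblq]

lemma blP_exists_block (hbl1 : ∀ i, 0 < (bl i).length) (p : ℕ) (hp : x.length ≤ p) :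
    ∃ n, (blP x bl n).length ≤ p ∧ p < (blP x bl (n+1)).length := by
  have hex : ∃ n, p < (blP x bl n).length :=
    ⟨p + 1, by have := blP_le_length (x := x) hbl1 (p+1); omega⟩
  have h0 : ¬ p < (blP x bl 0).length := by rw [blP_zero]; omega
  set n₀ := Nat.find hex with hn₀
  have hn₀pos : n₀ ≠ 0 := fun h => h0 (h ▸ Nat.find_spec hex)
  obtain ⟨n, hn⟩ : ∃ n, n₀ = n + 1 := ⟨n₀ - 1, by omega⟩
  refine ⟨n, ?_, ?_⟩
  · by_contra hc
    exact Nat.find_min hex (by omega : n < n₀) (by omega)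
  · have := Nat.find_spec hex
    rwa [← hn₀, hn] at this

end Blocks

section Bridge1

variable {M : DetAuto α} {c : M.Q → ℕ} {q : M.Q} {x x₁ x₂ : List α}

lemma runA (w : ℕ → α) (u₀ : List α)
    (h : ∀ k, HasPrefixWord w (u₀ ++ (List.replicate k x₁).flatten))
    (hq : runOn M M.init u₀ = q) (h1 : runOn M q x₁ = q) (hne : x₁ ≠ []) :
    ∀ n, u₀.length ≤ n →
      M.run w n = runOn M q (x₁.take ((n - u₀.length) % x₁.length)) := by
  intro n hn
  have hx1 : 0 < x₁.length := List.length_pos_iff.2 hne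
  set t := n - u₀.length with ht
  have hlen : n ≤ (u₀ ++ (List.replicate t x₁).flatten).length := by
    rw [List.length_append, length_flatten_replicate]
    have := Nat.le_mul_of_pos_right t hx1
    omega
  rw [run_eq_of_prefix M w _ (h t) n hlen]
  rw [List.take_append, List.take_of_length_le (by omega),
    runOn_append, hq]
  rw [show n - u₀.length = t from rfl]
  exact runOn_take_replicate M q x₁ h1 hne t t (Nat.le_mul_of_pos_right t hx1)

lemma langA_not_accept (hq : runOn M M.init x = q) (h1 : runOn M q x₁ = q)
    (h2 : runOn M q x₂ = q) (hne1 : x₁ ≠ [])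
    (heven : Even (maxLoop M c q x₁)) :
    ∀ w ∈ LangA x x₁ x₂, ¬ ParityAccept M c w := by
  rintro w ⟨ws, hws, hpre⟩ ⟨m, hodd, hfreq, hmax⟩
  have hx1 : 0 < x₁.length := List.length_pos_iff.2 hne1
  have hu₀ : runOn M M.init (x ++ ws.flatten) = q := by
    rw [runOn_append, hq]
    exact runOn_flatten_of_loops M q ws (fun u hu => by
      rcases hws u hu with h | h <;> simp [h, h1, h2])
  have hrun : ∀ n, (x ++ ws.flatten).length ≤ n →
      M.run w n = runOn M q (x₁.take ((n - (x ++ ws.flatten).length) % x₁.length)) := by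
    exact runA w (x ++ ws.flatten) (fun k => hpre k) hu₀ h1 hne1
  obtain ⟨i, hilt, hie⟩ := exists_maxLoop M c q x₁ hne1
  have hfe : ∃ᶠ n in atTop, c (M.run w n) = maxLoop M c q x₁ := by
    rw [frequently_atTop]
    intro N
    have hNle : N ≤ N * x₁.length := Nat.le_mul_of_pos_right N hx1
    refine ⟨(x ++ ws.flatten).length + (N * x₁.length + i), by omega, ?_⟩
    rw [hrun _ (by omega)]
    have hmod : ((x ++ ws.flatten).length + (N * x₁.length + i)
        - (x ++ ws.flatten).length) % x₁.length = i := by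
      rw [Nat.add_sub_cancel_left, Nat.mul_add_mod', Nat.mod_eq_of_lt hilt]
    rw [hmod, hie]
  have hem : maxLoop M c q x₁ ≤ m := hmax _ hfe
  have hme : m ≤ maxLoop M c q x₁ := by
    obtain ⟨n, hn, hcn⟩ :=
      (hfreq.and_eventually (eventually_ge_atTop (x ++ ws.flatten).length)).exists
    rw [hrun n hcn] at hn
    rw [← hn]
    exact le_maxLoop M c q x₁ (Nat.mod_lt _ hx1)
  have hme' : m = maxLoop M c q x₁ := le_antisymm hme hem
  rw [hme'] at hodd
  exact (Nat.not_odd_iff_even.2 heven) hodd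

lemma langB_accept (hq : runOn M M.init x = q) (h1 : runOn M q x₁ = q)
    (h2 : runOn M q x₂ = q) (hne1 : x₁ ≠ []) (hne2 : x₂ ≠ [])
    (hodd : Odd (maxLoop M c q x₂)) (hlt : maxLoop M c q x₁ < maxLoop M c q x₂) :
    ∀ w ∈ LangB x x₁ x₂, ParityAccept M c w := by
  rintro w ⟨j, hpre0⟩
  have hx1 : 0 < x₁.length := List.length_pos_iff.2 hne1
  have hx2 : 0 < x₂.length := List.length_pos_iff.2 hne2
  set bl : ℕ → List α := fun i => (List.replicate (j i) x₁).flatten ++ x₂ with hbl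
  have hpre : ∀ n, HasPrefixWord w (blP x bl n) := fun n => hpre0 n
  have hblq : ∀ n, runOn M q (bl n) = q := by
    intro n
    rw [hbl]
    simp only [runOn_append, runOn_replicate_loop M q x₁ h1, h2]
  have hbl1 : ∀ i, 0 < (bl i).length := by
    intro i; rw [hbl]; simp only [List.length_append]; omega
  have hbllen : ∀ n, (bl n).length = j n * x₁.length + x₂.length := by
    intro n; rw [hbl]; simp only [List.length_append, length_flatten_replicate]
  have hrun := blP_run hq hblq hpre
  -- colors within a block are ≤ d
  have hcol : ∀ n t, t ≤ (bl n).length →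
      c (runOn M q ((bl n).take t)) ≤ maxLoop M c q x₂ := by
    intro n t ht
    rw [hbllen n] at ht
    rw [hbl]
    rcases le_or_gt t (j n * x₁.length) with h | h
    · rw [List.take_append_of_le_length (by rw [length_flatten_replicate]; omega)]
      rw [runOn_take_replicate M q x₁ h1 hne1 (j n) t h]
      exact le_trans (le_maxLoop M c q x₁ (Nat.mod_lt _ hx1)) hlt.le
    · rw [List.take_append,
        List.take_of_length_le (by rw [length_flatten_replicate]; omega),
        runOn_append, runOn_replicate_loop M q x₁ h1, length_flatten_replicate]
      rcases lt_or_ge (t - j n * x₁.length) x₂.length with h' | h'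
      · exact le_maxLoop M c q x₂ h'
      · rw [List.take_of_length_le h']
        have := le_maxLoop M c q x₂ (i := 0) (by omega)
        simpa [h2] using this
  refine ⟨maxLoop M c q x₂, hodd, ?_, ?_⟩
  · -- frequent d
    obtain ⟨i, hilt, hid⟩ := exists_maxLoop M c q x₂ hne2
    rw [frequently_atTop]
    intro N
    have hsl := blP_le_length (x := x) hbl1 N
    refine ⟨(blP x bl N).length + (j N * x₁.length + i), by omega, ?_⟩
    have hble : j N * x₁.length + i ≤ (bl N).length := by rw [hbllen]; omega
    rw [hrun N _ hble, hbl, List.take_append,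
      List.take_of_length_le (by rw [length_flatten_replicate]; omega),
      length_flatten_replicate, Nat.add_sub_cancel_left, runOn_append,
      runOn_replicate_loop M q x₁ h1, hid]
  · -- maximality
    intro m' hm'
    obtain ⟨p, hp, hpge⟩ := (hm'.and_eventually (eventually_ge_atTop x.length)).exists
    obtain ⟨n, hlow, hhigh⟩ := blP_exists_block (x := x) hbl1 p hpge
    rw [blP_length_succ] at hhigh
    have ht : p - (blP x bl n).length ≤ (bl n).length := by omega
    have hr := hrun n (p - (blP x bl n).length) ht
    rw [show (blP x bl n).length + (p - (blP x bl n).length) = p by omega] at hr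
    rw [hr] at hp
    rw [← hp]
    exact hcol n _ ht

end Bridge1

section Bridge2

variable {M : DetAuto α} {c : M.Q → ℕ}

def HasPattern (M : DetAuto α) (c : M.Q → ℕ) : Prop :=
  ∃ u v₁ v₂ : List α, v₁ ≠ [] ∧ v₂ ≠ [] ∧
    runOn M (runOn M M.init u) v₁ = runOn M M.init u ∧
    runOn M (runOn M M.init u) v₂ = runOn M M.init u ∧
    Even (maxLoop M c (runOn M M.init u) v₁) ∧
    Odd (maxLoop M c (runOn M M.init u) v₂) ∧
    maxLoop M c (runOn M M.init u) v₁ < maxLoop M c (runOn M M.init u) v₂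

/-- the co-Büchi acceptance set: states with no odd loop -/
def accSet (M : DetAuto α) (c : M.Q → ℕ) : Set M.Q :=
  { p | ¬ ∃ v : List α, v ≠ [] ∧ runOn M p v = p ∧ Odd (maxLoop M c p v) }

/-- colors along a run are eventually bounded by the max frequent color -/
lemma eventually_color_le (w : ℕ → α) (m : ℕ)
    (hmax : ∀ m', (∃ᶠ n in atTop, c (M.run w n) = m') → m' ≤ m) :
    ∀ᶠ n in atTop, c (M.run w n) ≤ m := by
  have h1 : ∀ᶠ n in atTop, ∀ p ∈ (Finset.univ : Finset M.Q),
      M.run w n = p → c p ≤ m := by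
    rw [Filter.eventually_all_finset]
    intro p _
    rcases le_or_gt (c p) m with h | h
    · filter_upwards with n _; exact h
    · have : ¬ ∃ᶠ n in atTop, M.run w n = p := by
        intro hf
        have : ∃ᶠ n in atTop, c (M.run w n) = c p := hf.mono (fun n hn => by rw [hn])
        exact absurd (hmax _ this) (by omega)
      filter_upwards [not_frequently.1 this] with n hn h'
      exact absurd h' hn
  filter_upwards [h1] with n hn
  have := hn (M.run w n) (Finset.mem_univ _) rfl
  exact this

/-- a loop along the run between two occurrences of the same state -/
lemma seg_loop_maxLoop (w : ℕ → α) (m : ℕ) (N n₁ n₂ n₃ : ℕ)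
    (hN : ∀ k, N ≤ k → c (M.run w k) ≤ m) (h1 : N ≤ n₁) (h12 : n₁ ≤ n₂) (h23 : n₂ < n₃)
    (hq : M.run w n₃ = M.run w n₁) (hcm : c (M.run w n₂) = m) :
    seg w n₁ (n₃ - n₁) ≠ [] ∧
    runOn M (M.run w n₁) (seg w n₁ (n₃ - n₁)) = M.run w n₁ ∧
    maxLoop M c (M.run w n₁) (seg w n₁ (n₃ - n₁)) = m := by
  have hlen : (seg w n₁ (n₃ - n₁)).length = n₃ - n₁ := seg_length w _ _
  have hne : seg w n₁ (n₃ - n₁) ≠ [] := by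
    rw [← List.length_pos_iff_ne_nil, hlen]; omega
  have hloop : runOn M (M.run w n₁) (seg w n₁ (n₃ - n₁)) = M.run w n₁ := by
    rw [runOn_seg, show n₁ + (n₃ - n₁) = n₃ by omega, hq]
  refine ⟨hne, hloop, le_antisymm ?_ ?_⟩
  · apply Finset.sup_le
    intro i hi
    rw [Finset.mem_range, hlen] at hi
    rw [seg_take w _ _ i (by omega), runOn_seg]
    exact hN _ (by omega)
  · have hi2 : n₂ - n₁ < (seg w n₁ (n₃ - n₁)).length := by rw [hlen]; omega
    have := le_maxLoop M c (M.run w n₁) (seg w n₁ (n₃ - n₁)) hi2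
    rwa [seg_take w _ _ _ (by omega), runOn_seg,
      show n₁ + (n₂ - n₁) = n₂ by omega, hcm] at this

lemma accept_eventually_not_acc (w : ℕ → α) (h : ParityAccept M c w) :
    ∀ᶠ n in atTop, M.run w n ∉ accSet M c := by
  obtain ⟨m, hodd, hfreq, hmax⟩ := h
  obtain ⟨qm, hqm⟩ := exists_frequently_and (fun n => M.run w n) _ hfreq
  obtain ⟨N, hN⟩ := eventually_atTop.1 (eventually_color_le w m hmax)
  filter_upwards [eventually_mem_freq (fun n => M.run w n), eventually_ge_atTop N]
    with n hrevisit hn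
  -- find n₂ > n with run = qm, then n₃ > n₂ with run = run n
  obtain ⟨n₂, hn₂ge, hcq, hq2⟩ := frequently_atTop.1 hqm (n+1)
  obtain ⟨n₃, hn₃ge, hq3⟩ := frequently_atTop.1 hrevisit (n₂+1)
  have hcm : c (M.run w n₂) = m := by rw [hq2] at hcq ⊢; exact hcq
  obtain ⟨hne, hloop, hml⟩ := seg_loop_maxLoop w m N n n₂ n₃ hN hn (by omega) (by omega) hq3 hcm
  intro hacc
  exact hacc ⟨seg w n (n₃ - n), hne, hloop, hml ▸ hodd⟩

lemma reject_frequently_acc (hnp : ¬ HasPattern M c) (w : ℕ → α)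
    (h : ¬ ParityAccept M c w) : ∃ᶠ n in atTop, M.run w n ∈ accSet M c := by
  classical
  -- the finset of frequently visited states
  set F : Finset M.Q := Finset.univ.filter (fun p => ∃ᶠ n in atTop, M.run w n = p) with hF
  have hFne : F.Nonempty := by
    obtain ⟨p, hp⟩ := exists_frequently_state (fun n => M.run w n)
    exact ⟨p, by simp [hF, hp]⟩
  set e := F.sup c with he
  have hefreq : ∃ᶠ n in atTop, c (M.run w n) = e := by
    obtain ⟨p, hpF, hpe⟩ := F.exists_mem_eq_sup hFne c
    rw [hF, Finset.mem_filter] at hpF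
    exact hpF.2.mono (fun n hn => by rw [hn]; exact hpe.symm)
  have hemax : ∀ m', (∃ᶠ n in atTop, c (M.run w n) = m') → m' ≤ e := by
    intro m' hm'
    obtain ⟨p, hp⟩ := exists_frequently_and (fun n => M.run w n) _ hm'
    have hpF : p ∈ F := by
      rw [hF, Finset.mem_filter]
      exact ⟨Finset.mem_univ _, hp.mono (fun n hn => hn.2)⟩
    obtain ⟨n, hn, hnp'⟩ := hp.exists
    calc m' = c p := by rw [← hn, hnp']
      _ ≤ e := Finset.le_sup (f := c) hpF
  have heven : Even e := by
    rcases Nat.even_or_odd e with h' | h'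
    · exact h'
    · exact absurd ⟨e, h', hefreq, hemax⟩ h
  obtain ⟨pe, hpeF, hpee⟩ := F.exists_mem_eq_sup hFne c
  rw [hF, Finset.mem_filter] at hpeF
  have hpefreq : ∃ᶠ n in atTop, M.run w n = pe := hpeF.2
  obtain ⟨N, hN⟩ := eventually_atTop.1 (eventually_color_le w e hemax)
  rw [frequently_atTop]
  intro K
  obtain ⟨n₁, hn₁ge, hq1⟩ := frequently_atTop.1 hpefreq (max K N)
  refine ⟨n₁, le_trans (le_max_left _ _) hn₁ge, ?_⟩
  -- show run w n₁ ∈ accSet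
  intro hv
  obtain ⟨v, hvne, hvloop, hvodd⟩ := hv
  -- build the pattern
  obtain ⟨n₂, hn₂ge, hq2⟩ := frequently_atTop.1 hpefreq (n₁+1)
  have hcm : c (M.run w n₁) = e := by rw [hq1]; exact hpee.symm
  obtain ⟨hne, hloop, hml⟩ := seg_loop_maxLoop w e N n₁ n₁ n₂ hN
    (le_trans (le_max_right _ _) hn₁ge) le_rfl (by omega) (by rw [hq1, hq2]) hcm
  apply hnp
  refine ⟨seg w 0 n₁, seg w n₁ (n₂ - n₁), v, hne, hvne, ?_⟩
  have hu : runOn M M.init (seg w 0 n₁) = M.run w n₁ := by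
    have : M.init = M.run w 0 := rfl
    rw [this, runOn_seg, Nat.zero_add]
  rw [hu]
  have hd : e < maxLoop M c (M.run w n₁) v := by
    have h1 : e ≤ maxLoop M c (M.run w n₁) v := by
      have := cq_le_maxLoop M c (M.run w n₁) v hvne
      omega
    rcases eq_or_lt_of_le h1 with h' | h'
    · rw [← h'] at hvodd
      exact absurd heven (Nat.not_even_iff_odd.2 hvodd)
    · exact h'
  exact ⟨hloop, hvloop, hml ▸ heven, hvodd, hml ▸ hd⟩

lemma notPattern_dcw {L : Set (ℕ → α)} (hM : ∀ w, w ∈ L ↔ ParityAccept M c w)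
    (hnp : ¬ HasPattern M c) : DCWRecognizable L := by
  refine ⟨M, accSet M c, fun w => ?_⟩
  constructor
  · intro hw
    exact Filter.not_frequently.2 (accept_eventually_not_acc w ((hM w).1 hw))
  · intro hnf
    by_contra hw
    exact hnf (reject_frequently_acc hnp w (fun h => hw ((hM w).2 h)))

lemma pattern_rhs {L : Set (ℕ → α)} (hM : ∀ w, w ∈ L ↔ ParityAccept M c w)
    (hp : HasPattern M c) :
    ∃ x x₁ x₂ : List α, x₁ ≠ [] ∧ x₂ ≠ [] ∧
      LangA x x₁ x₂ ∩ L = ∅ ∧ LangB x x₁ x₂ ⊆ L := by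
  obtain ⟨u, v₁, v₂, h1, h2, hl1, hl2, heven, hodd, hlt⟩ := hp
  refine ⟨u, v₁, v₂, h1, h2, ?_, ?_⟩
  · rw [Set.eq_empty_iff_forall_notMem]
    rintro w ⟨hwA, hwL⟩
    exact langA_not_accept rfl hl1 hl2 h1 heven w hwA ((hM w).1 hwL)
  · intro w hw
    exact (hM w).2 (langB_accept rfl hl1 hl2 h1 h2 hodd hlt w hw)

end Bridge2

section Pumping

variable {x x₁ x₂ : List α}

def PlL (x x₁ x₂ : List α) (l : List ℕ) : List α :=
  x ++ (l.map (fun n => (List.replicate n x₁).flatten ++ x₂)).flatten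

lemma flatten_expand (x₁ x₂ : List α) : ∀ l : List ℕ,
    ((l.map (fun n => List.replicate n x₁ ++ [x₂])).flatten).flatten
      = (l.map (fun n => (List.replicate n x₁).flatten ++ x₂)).flatten
  | [] => rfl
  | n :: l => by
    simp only [List.map_cons, List.flatten_cons, List.flatten_append,
      flatten_expand x₁ x₂ l, List.flatten_cons, List.flatten_nil, List.append_nil,
      List.append_assoc]

lemma mem_expand (x₁ x₂ : List α) (l : List ℕ) (u : List α)
    (hu : u ∈ (l.map (fun n => List.replicate n x₁ ++ [x₂])).flatten) :
    u = x₁ ∨ u = x₂ := by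
  rw [List.mem_flatten] at hu
  obtain ⟨v, hv, huv⟩ := hu
  rw [List.mem_map] at hv
  obtain ⟨n, _, hn⟩ := hv
  rw [← hn, List.mem_append] at huv
  rcases huv with h | h
  · exact Or.inl (List.eq_of_mem_replicate h)
  · exact Or.inr (List.mem_singleton.1 h)

lemma PlL_append_singleton (x x₁ x₂ : List α) (l : List ℕ) (n : ℕ) :
    PlL x x₁ x₂ (l ++ [n]) = PlL x x₁ x₂ l ++ ((List.replicate n x₁).flatten ++ x₂) := by
  simp [PlL, List.flatten_append, List.append_assoc]

lemma rhs_not_dcw {L : Set (ℕ → α)} (hne1 : x₁ ≠ []) (hne2 : x₂ ≠ [])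
    (hA : LangA x x₁ x₂ ∩ L = ∅) (hB : LangB x x₁ x₂ ⊆ L) : ¬ DCWRecognizable L := by
  rintro ⟨NA, Fa, hN⟩
  have hx1 : 0 < x₁.length := List.length_pos_iff.2 hne1
  have hx2 : 0 < x₂.length := List.length_pos_iff.2 hne2
  set d : α := x₁.head hne1 with hd
  have claim : ∀ l : List ℕ, ∃ k p, (PlL x x₁ x₂ l).length ≤ p ∧
      p ≤ (PlL x x₁ x₂ l).length + k * x₁.length ∧
      runOn NA NA.init ((PlL x x₁ x₂ l ++ (List.replicate k x₁).flatten).take p) ∈ Fa := by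
    intro l
    set P : ℕ → List α := fun k => PlL x x₁ x₂ l ++ (List.replicate k x₁).flatten with hP
    have hmono : ∀ k, P k <+: P (k+1) := by
      intro k
      rw [hP]
      simp only
      rw [List.replicate_succ', List.flatten_append, ← List.append_assoc]
      exact ⟨[x₁].flatten, by simp⟩
    have hlen : ∀ k, k < (P (k+1)).length := by
      intro k
      rw [hP]
      simp only [List.length_append, length_flatten_replicate]
      have : k + 1 ≤ (k+1) * x₁.length := Nat.le_mul_of_pos_right (k+1) hx1
      omega
    have hpre := hasPrefixWord_wordOf P d hmono hlen
    have hwA : wordOf P d ∈ LangA x x₁ x₂ := by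
      refine ⟨(l.map (fun n => List.replicate n x₁ ++ [x₂])).flatten,
        mem_expand x₁ x₂ l, fun n => ?_⟩
      rw [flatten_expand]
      exact hpre n
    have hwAnL : wordOf P d ∉ L := by
      intro h
      have : wordOf P d ∈ LangA x x₁ x₂ ∩ L := ⟨hwA, h⟩
      rw [hA] at this
      exact this
    have hfreq : ∃ᶠ n in atTop, NA.run (wordOf P d) n ∈ Fa := by
      by_contra hc
      exact hwAnL ((hN _).2 hc)
    obtain ⟨p, hp, hpF⟩ := frequently_atTop.1 hfreq (PlL x x₁ x₂ l).length
    have hple : p ≤ (P p).length := by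
      rw [hP]
      simp only [List.length_append, length_flatten_replicate]
      have := Nat.le_mul_of_pos_right p hx1
      omega
    refine ⟨p, p, hp, ?_, ?_⟩
    · have := Nat.le_mul_of_pos_right p hx1
      omega
    · rw [← run_eq_of_prefix NA (wordOf P d) (P p) (hpre p) p hple]
      exact hpF
  choose f pos hp1 hp2 hp3 using claim
  have hjs : ∃ js : ℕ → List ℕ, js 0 = [] ∧ ∀ n, js (n+1) = js n ++ [f (js n)] :=
    ⟨fun n => Nat.rec [] (fun _ l => l ++ [f l]) n, rfl, fun n => rfl⟩
  obtain ⟨js, hjs0, hjss⟩ := hjs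
  set j : ℕ → ℕ := fun i => f (js i) with hj
  set bl : ℕ → List α := fun i => (List.replicate (j i) x₁).flatten ++ x₂ with hbl
  have hbl1 : ∀ i, 0 < (bl i).length := by
    intro i
    rw [hbl]
    simp only [List.length_append]
    omega
  have hPeq : ∀ n, blP x bl n = PlL x x₁ x₂ (js n) := by
    intro n
    induction n with
    | zero => rw [blP_zero, hjs0]; simp [PlL]
    | succ n ih =>
      rw [blP_succ, ih, hjss, PlL_append_singleton, hbl]
  have hmono : ∀ n, blP x bl n <+: blP x bl (n+1) := by
    intro n
    rw [blP_succ]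
    exact ⟨bl n, rfl⟩
  have hlen : ∀ n, n < (blP x bl (n+1)).length := by
    intro n
    have := blP_le_length (x := x) hbl1 (n+1)
    omega
  have hpre : ∀ n, HasPrefixWord (wordOf (blP x bl) d) (blP x bl n) :=
    hasPrefixWord_wordOf _ d hmono hlen
  have hwB : wordOf (blP x bl) d ∈ LangB x x₁ x₂ := ⟨j, fun n => hpre n⟩
  have hnof : ¬ ∃ᶠ n in atTop, NA.run (wordOf (blP x bl) d) n ∈ Fa := (hN _).1 (hB hwB)
  apply hnof
  rw [frequently_atTop]
  intro K
  have hblK : bl K = (List.replicate (f (js K)) x₁).flatten ++ x₂ := by rw [hbl]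
  have hblKlen : (bl K).length = f (js K) * x₁.length + x₂.length := by
    rw [hblK, List.length_append, length_flatten_replicate]
  refine ⟨pos (js K), ?_, ?_⟩
  · have h1 := hp1 (js K)
    have h2 := blP_le_length (x := x) hbl1 K
    rw [hPeq K] at h2
    omega
  · have hplen : pos (js K) ≤ (blP x bl (K+1)).length := by
      rw [blP_length_succ, hPeq K, hblKlen]
      have := hp2 (js K)
      omega
    rw [run_eq_of_prefix NA _ _ (hpre (K+1)) _ hplen]
    have hsplit : blP x bl (K+1)
        = (PlL x x₁ x₂ (js K) ++ (List.replicate (f (js K)) x₁).flatten) ++ x₂ := by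
      rw [blP_succ, hPeq K, hblK, List.append_assoc]
    rw [hsplit, List.take_append_of_le_length ?hle]
    case hle =>
      rw [List.length_append, length_flatten_replicate]
      exact hp2 (js K)
    exact hp3 (js K)

end Pumping

end S14

/-- An ω-regular language `L` is not DCW-recognizable iff there are finite words
`x ∈ Σ*`, `x₁, x₂ ∈ Σ⁺` with `x·(x₁+x₂)*·x₁^ω ∩ L = ∅` and `x·(x₁*·x₂)^ω ⊆ L`. -/
theorem stmt_14 {Sig : Type} [Fintype Sig] (L : Set (ℕ → Sig)) (hL : OmegaRegular L) :
    ¬ DCWRecognizable L ↔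
      ∃ x x₁ x₂ : List Sig, x₁ ≠ [] ∧ x₂ ≠ [] ∧
        LangA x x₁ x₂ ∩ L = ∅ ∧ LangB x x₁ x₂ ⊆ L := by
  obtain ⟨M, c, hM⟩ := hL
  constructor
  · intro hndcw
    by_contra hrhs
    exact hndcw (S14.notPattern_dcw hM (fun hp => hrhs (S14.pattern_rhs hM hp)))
  · rintro ⟨x, x₁, x₂, h1, h2, hA, hB⟩
    exact S14.rhs_not_dcw h1 h2 hA hB
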